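/- Let H be a complex Hilbert space, let p ∈ B(H) be an orthogonal projection (p = p* = p ∘ p), and let b, c ∈ B(H) satisfy c* ∘ b = p and ‖b + c‖ ≤ 2. Then ker p ⊆ ker b ∩ ker c if and only if b = c; and in this case ker p = ker b = ker c. -/

import Mathlib

/-- If `p` is an orthogonal projection, `c* ∘ b = p` and `‖b + c‖ ≤ 2`, then
`ker p ⊆ ker b ∩ ker c` iff `b = c`, and in that case `ker p = ker b = ker c`. -/
theorem stmt_1 {H : Type*} [NormedAddCommGroup H] [InnerProductSpace ℂ H] [CompleteSpace H]
    (p b c : H →L[ℂ] H)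
    (hpsa : ContinuousLinearMap.adjoint p = p) (hpidem : p ∘L p = p)
    (hcb : (ContinuousLinearMap.adjoint c) ∘L b = p)
    (hnorm : ‖b + c‖ ≤ 2) :
    (LinearMap.ker (p : H →ₗ[ℂ] H) ≤
        LinearMap.ker (b : H →ₗ[ℂ] H) ⊓ LinearMap.ker (c : H →ₗ[ℂ] H) ↔ b = c) ∧
      (b = c → LinearMap.ker (p : H →ₗ[ℂ] H) = LinearMap.ker (b : H →ₗ[ℂ] H) ∧
        LinearMap.ker (b : H →ₗ[ℂ] H) = LinearMap.ker (c : H →ₗ[ℂ] H)) := by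
  have hbc : ∀ x y : H, (inner ℂ (b x) (c y) : ℂ) = inner ℂ (p x) y := by
    intro x y
    rw [← hcb]
    simp only [ContinuousLinearMap.comp_apply]
    rw [ContinuousLinearMap.adjoint_inner_left]
  -- on the range of p, b and c agree
  have key : ∀ y : H, p y = y → b y = c y := by
    intro y hy
    have h1 : (inner ℂ (b y) (c y) : ℂ) = (‖y‖ : ℂ) ^ 2 := by
      rw [hbc, hy, inner_self_eq_norm_sq_to_K]
      norm_cast
    have hre : RCLike.re (inner ℂ (b y) (c y) : ℂ) = ‖y‖ ^ 2 := by
      rw [h1]; norm_cast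
    have hadd : ‖b y + c y‖ ^ 2 = ‖b y‖ ^ 2 + 2 * ‖y‖ ^ 2 + ‖c y‖ ^ 2 := by
      rw [norm_add_sq (𝕜 := ℂ), hre]
    have hsub : ‖b y - c y‖ ^ 2 = ‖b y‖ ^ 2 - 2 * ‖y‖ ^ 2 + ‖c y‖ ^ 2 := by
      rw [norm_sub_sq (𝕜 := ℂ), hre]
    have hle : ‖b y + c y‖ ≤ 2 * ‖y‖ := by
      calc ‖b y + c y‖ = ‖(b + c) y‖ := by simp
        _ ≤ ‖b + c‖ * ‖y‖ := (b + c).le_opNorm y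
        _ ≤ 2 * ‖y‖ := mul_le_mul_of_nonneg_right hnorm (norm_nonneg _)
    have hz : ‖b y - c y‖ = 0 := by
      nlinarith [norm_nonneg (b y - c y), norm_nonneg (b y + c y), norm_nonneg y]
    rw [norm_eq_zero, sub_eq_zero] at hz
    exact hz
  -- if b = c then kernels coincide
  have hker : b = c → ∀ x : H, ‖b x‖ = ‖p x‖ := by
    intro h x
    have h1 : (inner ℂ (b x) (b x) : ℂ) = inner ℂ (p x) x := by
      conv_lhs => rw [h]
      rw [← hbc, h]
    have h2 : (inner ℂ (p x) (p x) : ℂ) = inner ℂ (p x) x := by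
      nth_rewrite 2 [← hpsa]
      rw [ContinuousLinearMap.adjoint_inner_right, ← ContinuousLinearMap.comp_apply, hpidem]
    rw [inner_self_eq_norm_sq_to_K] at h1 h2
    have : (‖b x‖ : ℝ) ^ 2 = ‖p x‖ ^ 2 := by
      have h3 := h1.trans h2.symm
      exact_mod_cast h3
    nlinarith [norm_nonneg (b x), norm_nonneg (p x)]
  have hkerP : b = c → LinearMap.ker (p : H →ₗ[ℂ] H) = LinearMap.ker (b : H →ₗ[ℂ] H) := by
    intro h
    ext x
    simp only [LinearMap.mem_ker, ContinuousLinearMap.coe_coe]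
    constructor
    · intro hx
      have := hker h x
      rw [hx, norm_zero, norm_eq_zero] at this
      exact this
    · intro hx
      have := hker h x
      rw [hx, norm_zero] at this
      exact (norm_eq_zero.mp this.symm)
  constructor
  · constructor
    · intro h
      ext x
      have hpker : p (x - p x) = 0 := by
        have : p (p x) = p x := by
          rw [← ContinuousLinearMap.comp_apply, hpidem]
        simp [map_sub, this]
      have hmem := h hpker
      obtain ⟨hb0, hc0⟩ := hmem
      have hb0 : b (x - p x) = 0 := hb0
      have hc0 : c (x - p x) = 0 := hc0
      have hbp : b (p x) = c (p x) := key (p x) (by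
        rw [← ContinuousLinearMap.comp_apply, hpidem])
      have : b x = b (p x) + b (x - p x) := by rw [map_sub]; abel
      have hcx : c x = c (p x) + c (x - p x) := by rw [map_sub]; abel
      show b x = c x
      rw [this, hcx, hbp, hb0, hc0]
    · intro h
      rw [hkerP h, ← h]
      exact le_inf le_rfl le_rfl
  · intro h
    refine ⟨hkerP h, ?_⟩
    rw [← h]
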